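/- No single computably enumerable set of true sentences (theory of finite complexity) contains, for every elegant program p, the sentence asserting p's elegance; consequently, the set of true elegance assertions is not computably enumerable. -/

import Mathlib

/-- Programs and outputs are finite bit strings. -/
abbrev Str := List Bool

/-- A computer is a partial computable function from bit strings to bit strings.
A universal computer can simulate any partial computable function via a fixed prefix. -/
def Univ (U : Str →. Str) : Prop :=
  Partrec U ∧ ∀ F : Str →. Str, Partrec F → ∃ e : Str, ∀ p : Str, U (e ++ p) = F p

/-- A program `p` is elegant (for `U`) if it halts and no strictly shorter program
produces the same output. -/
def Elegant (U : Str →. Str) (p : Str) : Prop :=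
  ∃ x : Str, x ∈ U p ∧ ∀ q : Str, q.length < p.length → x ∉ U q

/-- Kolmogorov complexity of `x` relative to `U`: the length of a shortest program for `x`. -/
noncomputable def Kc (U : Str →. Str) (x : Str) : ℕ :=
  sInf { n : ℕ | ∃ p : Str, p.length = n ∧ x ∈ U p }

/-- The domain of `U` is prefix-free. -/
def PrefixFreeDom (U : Str →. Str) : Prop :=
  ∀ p q : Str, (U p).Dom → (U q).Dom → p <+: q → p = q

/-- A universal prefix-free machine. -/
def UnivPF (U : Str →. Str) : Prop :=
  Partrec U ∧ PrefixFreeDom U ∧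
    ∀ F : Str →. Str, Partrec F → PrefixFreeDom F →
      ∃ e : Str, ∀ p : Str, U (e ++ p) = F p

open Classical in
/-- The halting probability `Ω = Σ_{U(p)↓} 2^(-|p|)`. -/
noncomputable def Omega (U : Str →. Str) : ℝ :=
  ∑' p : Str, if (U p).Dom then ((1 : ℝ) / 2) ^ p.length else 0

/-- The `n`-th bit (0-indexed) of the binary expansion of a real `α`. -/
noncomputable def nthBit (α : ℝ) (n : ℕ) : Bool :=
  decide (⌊α * 2 ^ (n + 1)⌋ % 2 = 1)

/-- The string of the first `n` binary digits of `α`. -/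
noncomputable def bitsOf (α : ℝ) (n : ℕ) : Str :=
  (List.range n).map (nthBit α)

/-- An injective encoding of a pair (string, number) as a bit string,
used to express the sentence `K(x) > n`. -/
def encPair (x : Str) (n : ℕ) : Str :=
  (x.flatMap fun b => [b, b]) ++ [true, false] ++ List.replicate n true

/-- An injective encoding of the sentence `the i-th bit of Ω is b`. -/
def encBit (i : ℕ) (b : Bool) : Str :=
  List.replicate i true ++ [false, b]

/-- A set of pairs is computably enumerable. -/
def CE (S : Set (Str × ℕ)) : Prop :=
  ∃ f : ℕ → Option (Str × ℕ), Computable f ∧ S = { a | ∃ k, f k = some a }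

/-- A set of strings is computably enumerable. -/
def CEStr (S : Set Str) : Prop :=
  ∃ f : ℕ → Option Str, Computable f ∧ S = { a | ∃ k, f k = some a }

/-- No c.e. set of true elegance assertions contains all of them; consequently the set
of elegant programs is not computably enumerable (assuming `U` has infinitely many
distinct outputs). -/
lemma aux_main (U : Str →. Str) (hU : Univ U)
    (hinf : { x : Str | ∃ p : Str, x ∈ U p }.Infinite) :
    ∀ S : Set Str, CEStr S → S ⊆ { p : Str | Elegant U p } →
      ∃ p : Str, Elegant U p ∧ p ∉ S := by
  intro S hCE hsub
  obtain ⟨f, hf, hSeq⟩ := hCE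
  by_cases hb : ∃ N : ℕ, ∀ p ∈ S, p.length ≤ N
  · -- bounded case
    obtain ⟨N, hN⟩ := hb
    have hA : {x : Str | ∃ p : Str, p.length ≤ N ∧ x ∈ U p}.Finite := by
      have : {x : Str | ∃ p : Str, p.length ≤ N ∧ x ∈ U p} ⊆
          ⋃ p ∈ {p : Str | p.length ≤ N}, {x | x ∈ U p} := by
        rintro x ⟨p, hp, hxp⟩
        exact Set.mem_biUnion hp hxp
      refine Set.Finite.subset (Set.Finite.biUnion (List.finite_length_le Bool N)
        (fun p _ => ?_)) this
      exact Set.Subsingleton.finite (fun a ha b hb => Part.mem_unique ha hb)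
    obtain ⟨x, hxout, hxA⟩ := (hinf.diff hA).nonempty
    have hne : {n : ℕ | ∃ p : Str, p.length = n ∧ x ∈ U p}.Nonempty := by
      obtain ⟨p, hp⟩ := hxout
      exact ⟨p.length, p, rfl, hp⟩
    obtain ⟨p, hplen, hxp⟩ := Nat.sInf_mem hne
    refine ⟨p, ⟨x, hxp, fun q hq hxq => ?_⟩, fun hpS => ?_⟩
    · have := Nat.sInf_le (s := {n : ℕ | ∃ p : Str, p.length = n ∧ x ∈ U p})
        ⟨q, rfl, hxq⟩
      omega
    · exact hxA ⟨p, hN p hpS, hxp⟩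
  · -- unbounded case: derive False
    exfalso
    push_neg at hb
    -- the search function
    set g : Str → ℕ → Option Str := fun q k =>
      (f k).bind fun r => if 2 * q.length < r.length then some r else none with hg
    have hgc : Computable₂ g := by
      apply Computable.option_bind (hf.comp Computable.snd)
      have : Primrec₂ (fun (p : Str × ℕ) (r : Str) =>
          if 2 * p.1.length < r.length then some r else none) := by
        refine Primrec.ite ?_ (Primrec.option_some.comp Primrec.snd)
          (Primrec.const none)
        exact Primrec.nat_lt.comp
          (Primrec.nat_mul.comp (Primrec.const 2) (Primrec.list_length.comp (Primrec.fst.comp Primrec.fst)))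
          (Primrec.list_length.comp Primrec.snd)
      exact this.to_comp
    set G : Str →. Str := fun q => (Nat.rfindOpt (g q)).bind U with hGdef
    have hG : Partrec G := by
      exact Partrec.bind (Partrec.rfindOpt hgc) (hU.1.comp Computable.snd)
    obtain ⟨e, he⟩ := hU.2 G hG
    set q : Str := List.replicate e.length true with hqdef
    have hqlen : q.length = e.length := List.length_replicate
    -- the search halts
    have hdom : (Nat.rfindOpt (g q)).Dom := by
      rw [Nat.rfindOpt_dom]
      obtain ⟨r, hrS, hrlen⟩ := hb (2 * q.length)
      rw [hSeq] at hrS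
      obtain ⟨k, hk⟩ := hrS
      refine ⟨k, r, ?_⟩
      simp [hg, hk, hrlen]
    obtain ⟨a, ha⟩ := Part.dom_iff_mem.1 hdom
    obtain ⟨k, hak⟩ := Nat.rfindOpt_spec ha
    -- a is an element of S with 2*|q| < |a|
    have hak' : g q k = some a := hak
    rw [hg] at hak'
    simp only [Option.bind_eq_some_iff] at hak'
    obtain ⟨r, hfk, hr⟩ := hak'
    have hlt : 2 * q.length < a.length := by
      by_cases h : 2 * q.length < r.length
      · simp [h] at hr; subst hr; exact h
      · simp [h] at hr
    have haS : a ∈ S := by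
      rw [hSeq]
      refine ⟨k, ?_⟩
      by_cases h : 2 * q.length < r.length
      · simp [h] at hr; subst hr; exact hfk
      · simp [h] at hr
    obtain ⟨x, hxa, hmin⟩ := hsub haS
    have hxG : x ∈ U (e ++ q) := by
      rw [he q, hGdef]
      exact Part.mem_bind_iff.2 ⟨a, ha, hxa⟩
    have : (e ++ q).length < a.length := by
      simp [List.length_append, hqlen] at hlt ⊢
      omega
    exact hmin (e ++ q) this hxG

theorem stmt8 (U : Str →. Str) (hU : Univ U)
    (hinf : { x : Str | ∃ p : Str, x ∈ U p }.Infinite) :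
    (∀ S : Set Str, CEStr S → S ⊆ { p : Str | Elegant U p } →
      ∃ p : Str, Elegant U p ∧ p ∉ S) ∧
    ¬ CEStr { p : Str | Elegant U p } := by
  refine ⟨aux_main U hU hinf, fun hCE => ?_⟩
  obtain ⟨p, hp, hnp⟩ := aux_main U hU hinf _ hCE (fun _ h => h)
  exact hnp hp
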